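/- Let S = conv{v₀, v₁, …, v_n} be an n-dimensional simplex in ℝⁿ. For i = 0, …, n define S_i = conv{w_{i0}, …, w_{in}} where w_{ij} = (1/(n+1))·v_i + (n/(n+1))·v_j. Then S = S₀ ∪ S₁ ∪ ⋯ ∪ S_n. -/

import Mathlib

open Finset

/-- Membership in the convex hull of the range of a finitely-indexed family is witnessed
by a tuple of nonnegative weights summing to 1. -/
lemma exists_weights_of_mem_convexHull_range {m : ℕ} {E : Type*} [AddCommGroup E] [Module ℝ E]
    (v : Fin m → E) {x : E} (hx : x ∈ convexHull ℝ (Set.range v)) :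
    ∃ w : Fin m → ℝ, (∀ i, 0 ≤ w i) ∧ ∑ i, w i = 1 ∧ ∑ i, w i • v i = x := by
  rw [convexHull_range_eq_exists_affineCombination] at hx
  obtain ⟨s, w, hw₀, hw₁, hx⟩ := hx
  refine ⟨fun i => if i ∈ s then w i else 0, fun i => ?_, ?_, ?_⟩
  · by_cases h : i ∈ s
    · simpa [h] using hw₀ i h
    · simp [h]
  · rw [Finset.sum_ite_mem, Finset.univ_inter, hw₁]
  · rw [← hx, affineCombination_eq_linear_combination s v w hw₁]
    rw [← Finset.sum_subset (Finset.subset_univ s) (by intro i _ hi; simp [hi])]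
    exact Finset.sum_congr rfl fun i hi => by simp [hi]

/-- The `n+1` homothetic copies `S_i = conv{w_{i0}, …, w_{in}}`, where
`w_{ij} = (1/(n+1)) v_i + (n/(n+1)) v_j`, cover the simplex `S = conv{v₀, …, v_n}`. -/
theorem simplex_covered_by_shrunken_copies {n : ℕ} (v : Fin (n + 1) → (Fin n → ℝ))
    (hv : AffineIndependent ℝ v) :
    convexHull ℝ (Set.range v) =
      ⋃ i : Fin (n + 1), convexHull ℝ
        (Set.range fun j : Fin (n + 1) =>
          (1 / (n + 1) : ℝ) • v i + ((n : ℝ) / (n + 1)) • v j) := by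
  have hn1 : (0 : ℝ) < (n : ℝ) + 1 := by positivity
  apply Set.Subset.antisymm
  · -- `S ⊆ ⋃ S_i`
    intro x hx
    obtain ⟨w, hw₀, hw₁, hxw⟩ := exists_weights_of_mem_convexHull_range v hx
    rcases Nat.eq_zero_or_pos n with hn | hn
    · -- degenerate case `n = 0`
      subst hn
      refine Set.mem_iUnion.mpr ⟨0, ?_⟩
      have h : (fun j : Fin 1 =>
          (1 / ((0 : ℕ) + 1) : ℝ) • v 0 + (((0 : ℕ) : ℝ) / ((0 : ℕ) + 1)) • v j) = v := by
        funext j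
        have : j = 0 := Subsingleton.elim _ _
        subst this
        norm_num
      rw [h]
      exact hx
    · -- main case `n ≥ 1`
      have hNn : (0 : ℝ) < (n : ℝ) := by exact_mod_cast hn
      -- pick an index with large weight
      have hex : ∃ i, 1 / ((n : ℝ) + 1) ≤ w i := by
        by_contra h
        push_neg at h
        have := Finset.sum_lt_sum_of_nonempty (Finset.univ_nonempty (α := Fin (n + 1)))
          (fun i _ => h i)
        rw [hw₁, Finset.sum_const, Finset.card_univ, Fintype.card_fin] at this
        have : (1 : ℝ) < 1 := by
          calc (1 : ℝ) < (n + 1) • (1 / ((n : ℝ) + 1)) := this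
            _ = 1 := by
              rw [nsmul_eq_mul]
              push_cast
              field_simp
        exact lt_irrefl _ this
      obtain ⟨i, hi⟩ := hex
      refine Set.mem_iUnion.mpr ⟨i, ?_⟩
      set s : Fin (n + 1) → ℝ :=
        fun j => (((n : ℝ) + 1) / n) * w j - (if j = i then 1 / (n : ℝ) else 0) with hs
      have hs₀ : ∀ j, 0 ≤ s j := by
        intro j
        by_cases hj : j = i
        · simp only [hs, hj, if_pos]
          rw [sub_nonneg, div_mul_eq_mul_div]
          have h1 : (1 : ℝ) ≤ ((n : ℝ) + 1) * w i := by
            have := mul_le_mul_of_nonneg_left hi (le_of_lt hn1)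
            rwa [mul_one_div, div_self (ne_of_gt hn1)] at this
          gcongr
        · simp only [hs, hj, if_neg, not_false_iff, sub_zero]
          exact mul_nonneg (by positivity) (hw₀ j)
      have hs₁ : ∑ j, s j = 1 := by
        simp only [hs]
        rw [Finset.sum_sub_distrib, ← Finset.mul_sum, hw₁, Finset.sum_ite_eq'
          (Finset.univ : Finset (Fin (n + 1))) i (fun _ => 1 / (n : ℝ))]
        simp only [Finset.mem_univ, if_pos, mul_one]
        field_simp
        ring
      refine mem_convexHull_of_exists_fintype s
        (fun j => (1 / ((n : ℝ) + 1)) • v i + ((n : ℝ) / ((n : ℝ) + 1)) • v j)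
        hs₀ hs₁ (fun j => ⟨j, by push_cast; ring_nf⟩) ?_
      · -- the combination equals `x`
        have key : ∑ j, s j • v j
            = (((n : ℝ) + 1) / n) • x - ((1 : ℝ) / n) • v i := by
          have h1 : ∑ j, s j • v j
              = ∑ j, ((((n : ℝ) + 1) / n) • (w j • v j)
                - (if j = i then ((1 : ℝ) / n) • v j else 0)) := by
            refine Finset.sum_congr rfl fun j _ => ?_
            simp only [hs, sub_smul, mul_smul, ite_smul, zero_smul]
          rw [h1, Finset.sum_sub_distrib, ← Finset.smul_sum, hxw,
            Finset.sum_ite_eq' Finset.univ i (fun j => ((1 : ℝ) / n) • v j)]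
          simp
        calc ∑ j, s j • ((1 / ((n : ℝ) + 1)) • v i + ((n : ℝ) / ((n : ℝ) + 1)) • v j)
            = (∑ j, s j) • ((1 / ((n : ℝ) + 1)) • v i)
              + ((n : ℝ) / ((n : ℝ) + 1)) • ∑ j, s j • v j := by
              simp only [smul_add]
              rw [Finset.sum_add_distrib, Finset.sum_smul, Finset.smul_sum]
              congr 1
              exact Finset.sum_congr rfl fun j _ => smul_comm _ _ _
          _ = x := by
              rw [hs₁, one_smul, key, smul_sub, smul_smul, smul_smul]
              have h1 : (n : ℝ) / ((n : ℝ) + 1) * (((n : ℝ) + 1) / n) = 1 := by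
                field_simp
              have h2 : (1 : ℝ) / ((n : ℝ) + 1) = (n : ℝ) / ((n : ℝ) + 1) * (1 / n) := by
                field_simp
              rw [h1, one_smul, ← h2]
              abel
  · -- `⋃ S_i ⊆ S`
    refine Set.iUnion_subset fun i => ?_
    refine convexHull_min ?_ (convex_convexHull ℝ _)
    rintro y ⟨j, rfl⟩
    have hc : (0 : ℝ) ≤ 1 / ((n : ℝ) + 1) := by positivity
    have hd : (0 : ℝ) ≤ (n : ℝ) / ((n : ℝ) + 1) := by positivity
    have hcd : 1 / ((n : ℝ) + 1) + (n : ℝ) / ((n : ℝ) + 1) = 1 := by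
      field_simp
      ring
    have := (convex_convexHull ℝ (Set.range v))
      (subset_convexHull ℝ _ (Set.mem_range_self i))
      (subset_convexHull ℝ _ (Set.mem_range_self j)) hc hd hcd
    convert this using 2 <;> push_cast <;> ring_nf
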